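/- Closedness of boundary sets is not invariant under boundary set equivalence: there exist a topological space M, topological embeddings φ : M → N and φ' : M → N' with open images into metric spaces, and boundary sets B ⊆ frontier(φ(M)) and B' ⊆ frontier(φ'(M)) that are equivalent (each covers the other), such that B is closed in N but B' is not closed in N'. Concretely, one may take M = {(x,y,z) ∈ ℝ³ : z < 0}, N = N' = ℝ³, φ the inclusion (so B = frontier(φ(M)) is the plane {z = 0}), and φ' a homeomorphism of M onto the open box {|x| < 1, |y| < 1, −1 < z < 0} (e.g. φ'(x,y,z) = (tanh x, tanh y, (2/π)·arctan z)), for which B' = frontier(φ'(M)) ∩ {z = 0} = {(x,y,0) : |x| < 1, |y| < 1} is equivalent to B but not closed. -/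
import Mathlib


open Set Topology Filter Metric

/-- `B` (a boundary set of the envelopment `φ`) covers `B'` (a boundary set of the
envelopment `φ'`): for every open neighbourhood `U` of `B` there is an open
neighbourhood `U'` of `B'` with `φ(φ'⁻¹(U' ∩ φ'(M))) ⊆ U`. -/
def Covers {M N N' : Type*} [TopologicalSpace M] [TopologicalSpace N] [TopologicalSpace N']
    (φ : M → N) (φ' : M → N') (B : Set N) (B' : Set N') : Prop :=
  ∀ U : Set N, IsOpen U → B ⊆ U →
    ∃ U' : Set N', IsOpen U' ∧ B' ⊆ U' ∧ φ '' (φ' ⁻¹' (U' ∩ range φ')) ⊆ U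

/-- A homeomorphism of `ℝ` onto `Ioo (-1) 1`, as a self-map of `ℝ`. -/
noncomputable def tOE : ℝ → ℝ := fun x => (orderIsoIooNegOneOne ℝ x : ℝ)

lemma tOE_isOpenEmbedding : Topology.IsOpenEmbedding tOE :=
  (isOpen_Ioo.isOpenEmbedding_subtypeVal).comp
    (orderIsoIooNegOneOne ℝ).toHomeomorph.isOpenEmbedding

lemma tOE_mem (x : ℝ) : tOE x ∈ Ioo (-1 : ℝ) 1 := (orderIsoIooNegOneOne ℝ x).2

lemma tOE_surj {y : ℝ} (hy : y ∈ Ioo (-1 : ℝ) 1) : ∃ x, tOE x = y :=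
  ⟨(orderIsoIooNegOneOne ℝ).symm ⟨y, hy⟩, by
    simp [tOE]⟩

/-- The "squeeze the first coordinate" map on `ℝ³`. -/
noncomputable def Tmap : (Fin 3 → ℝ) → (Fin 3 → ℝ) :=
  Pi.map fun i => if i = 0 then tOE else id

lemma Tmap_zero (v : Fin 3 → ℝ) : Tmap v 0 = tOE (v 0) := by
  simp [Tmap, Pi.map]

lemma Tmap_ne (v : Fin 3 → ℝ) {i : Fin 3} (hi : i ≠ 0) : Tmap v i = v i := by
  simp [Tmap, Pi.map, hi]

lemma Tmap_isOpenEmbedding : Topology.IsOpenEmbedding Tmap := by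
  refine Topology.IsOpenEmbedding.of_continuous_injective_isOpenMap ?_ ?_ ?_
  · refine Continuous.piMap fun i => ?_
    by_cases hi : i = 0
    · simpa [hi] using tOE_isOpenEmbedding.continuous
    · simpa [hi] using continuous_id
  · intro v w h
    funext i
    have := congrFun h i
    by_cases hi : i = 0
    · subst hi
      rw [Tmap_zero, Tmap_zero] at this
      exact tOE_isOpenEmbedding.injective this
    · rwa [Tmap_ne v hi, Tmap_ne w hi] at this
  · refine IsOpenMap.piMap (fun i => ?_) ?_
    · by_cases hi : i = 0 <;> simp [hi]
      exacts [tOE_isOpenEmbedding.isOpenMap, IsOpenMap.id]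
    · rw [Filter.cofinite_eq_bot]
      exact Filter.eventually_bot

lemma Tmap_update (v : Fin 3 → ℝ) {x : ℝ} (hx : tOE x = v 0) :
    Tmap (Function.update v 0 x) = v := by
  funext i
  by_cases hi : i = 0
  · subst hi
    rw [Tmap_zero, Function.update_self, hx]
  · rw [Tmap_ne _ hi, Function.update_of_ne hi]

/-- The key closure fact, for points approached in the third (or first) coordinate. -/
lemma mem_closure_aux {A : Set (Fin 3 → ℝ)} (v : Fin 3 → ℝ) (j : Fin 3) {c : ℝ} (hvj : v j = c)
    (hA : ∀ z ∈ Ioo (c - 1) c, Function.update v j z ∈ A) : v ∈ closure A := by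
  have hcont : Continuous fun z : ℝ => Function.update v j z := by
    refine continuous_pi fun i => ?_
    by_cases hi : i = j <;> simp [Function.update_apply, hi]
    · exact continuous_id
    · exact continuous_const
  have htd : Tendsto (fun z : ℝ => Function.update v j z) (𝓝[<] c) (𝓝 v) := by
    have h0 : Function.update v j c = v := by rw [← hvj, Function.update_eq_self]
    have h1 := (hcont.tendsto c).mono_left (nhdsWithin_le_nhds (s := Iio c))
    rwa [h0] at h1
  have hIoo : ∀ᶠ z in 𝓝[<] c, z ∈ Ioo (c - 1) c :=
    Ioo_mem_nhdsLT_of_mem ⟨by linarith, le_refl c⟩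
  exact mem_closure_of_tendsto htd (hIoo.mono fun z hz => hA z hz)

theorem closedness_not_invariant :
    ∃ (φ φ' : {v : Fin 3 → ℝ // v 2 < 0} → (Fin 3 → ℝ)) (B B' : Set (Fin 3 → ℝ)),
      Topology.IsEmbedding φ ∧ IsOpen (range φ) ∧
      Topology.IsEmbedding φ' ∧ IsOpen (range φ') ∧
      B ⊆ frontier (range φ) ∧ B' ⊆ frontier (range φ') ∧
      Covers φ φ' B B' ∧ Covers φ' φ B' B ∧
      IsClosed B ∧ ¬ IsClosed B' := by
  have h20 : (2 : Fin 3) ≠ 0 := by decide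
  have h02 : (0 : Fin 3) ≠ 2 := by decide
  have hrange : range (Subtype.val : {v : Fin 3 → ℝ // v 2 < 0} → (Fin 3 → ℝ)) =
      {v : Fin 3 → ℝ | v 2 < 0} := Subtype.range_coe
  have hMopen : IsOpen {v : Fin 3 → ℝ | v 2 < 0} :=
    isOpen_lt (continuous_apply 2) continuous_const
  have hopen' : IsOpen {v : Fin 3 → ℝ | v 0 ∈ Ioo (-1 : ℝ) 1 ∧ v 2 < 0} :=
    (isOpen_Ioo.preimage (continuous_apply 0)).inter hMopen
  have hrange' : range (Tmap ∘ (Subtype.val : {v : Fin 3 → ℝ // v 2 < 0} → (Fin 3 → ℝ))) =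
      {v : Fin 3 → ℝ | v 0 ∈ Ioo (-1 : ℝ) 1 ∧ v 2 < 0} := by
    rw [Set.range_comp, hrange]
    ext v
    constructor
    · rintro ⟨w, hw, rfl⟩
      exact ⟨by rw [Tmap_zero]; exact tOE_mem (w 0), by rw [Tmap_ne w h20]; exact hw⟩
    · rintro ⟨h0, h2⟩
      obtain ⟨x, hx⟩ := tOE_surj h0
      refine ⟨Function.update v 0 x, ?_, Tmap_update v hx⟩
      show Function.update v 0 x 2 < 0
      rwa [Function.update_of_ne h20]
  refine ⟨Subtype.val, Tmap ∘ Subtype.val,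
    {v | v 2 = 0}, {v | v 0 ∈ Ioo (-1 : ℝ) 1 ∧ v 2 = 0}, ?_, ?_, ?_, ?_, ?_, ?_, ?_, ?_, ?_, ?_⟩
  · exact Topology.IsEmbedding.subtypeVal
  · rw [hrange]; exact hMopen
  · exact Tmap_isOpenEmbedding.isEmbedding.comp Topology.IsEmbedding.subtypeVal
  · rw [hrange']; exact hopen'
  · rw [hrange, hMopen.frontier_eq]
    intro v hv
    refine ⟨mem_closure_aux v 2 (c := 0) hv fun z hz => ?_, fun h => ?_⟩
    · show Function.update v 2 z 2 < 0
      rw [Function.update_self]; exact hz.2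
    · rw [mem_setOf_eq, hv] at h; exact lt_irrefl 0 h
  · rw [hrange', hopen'.frontier_eq]
    rintro v ⟨h0, h2⟩
    refine ⟨mem_closure_aux v 2 (c := 0) h2 fun z hz => ?_, fun h => ?_⟩
    · refine ⟨?_, ?_⟩
      · rwa [Function.update_of_ne h02]
      · rw [Function.update_self]; exact hz.2
    · rw [mem_setOf_eq, h2] at h; exact lt_irrefl 0 h.2
  · -- Covers φ φ' B B'
    intro U hU hBU
    refine ⟨Tmap '' U, Tmap_isOpenEmbedding.isOpenMap U hU, ?_, ?_⟩
    · rintro v ⟨h0, h2⟩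
      obtain ⟨x, hx⟩ := tOE_surj h0
      refine ⟨Function.update v 0 x, hBU ?_, Tmap_update v hx⟩
      show Function.update v 0 x 2 = 0
      rwa [Function.update_of_ne h20]
    · rintro n ⟨m, hm, rfl⟩
      obtain ⟨u, hu, heq⟩ := hm.1
      exact Tmap_isOpenEmbedding.injective heq ▸ hu
  · -- Covers φ' φ B' B
    intro U hU hB'U
    refine ⟨Tmap ⁻¹' U, hU.preimage Tmap_isOpenEmbedding.continuous, ?_, ?_⟩
    · intro v hv
      refine hB'U ⟨?_, ?_⟩
      · rw [Tmap_zero]; exact tOE_mem (v 0)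
      · rw [Tmap_ne v h20]; exact hv
    · rintro n ⟨m, hm, rfl⟩
      exact hm.1
  · exact isClosed_eq (continuous_apply 2) continuous_const
  · intro hcl
    set p : Fin 3 → ℝ := fun i => if i = 0 then (1 : ℝ) else 0 with hp_def
    have hp : p ∈ closure {v : Fin 3 → ℝ | v 0 ∈ Ioo (-1 : ℝ) 1 ∧ v 2 = 0} := by
      refine mem_closure_aux p 0 (c := 1) (by simp [hp_def]) fun z hz => ?_
      refine ⟨?_, ?_⟩
      · rw [Function.update_self]
        exact ⟨by linarith [hz.1], hz.2⟩
      · rw [Function.update_of_ne h20]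
        simp [hp_def]
    have hmem := hcl.closure_subset hp
    have h1 : (1 : ℝ) < 1 := by simpa [hp_def] using hmem.1.2
    exact lt_irrefl 1 h1
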